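/- arXiv:2005.10973 — 6 statements merged into one kernel-verified Lean document; each statement's English description precedes it below -/
import Mathlib

section
/- For 0 < d < 1/2, the integral ∫_0^∞ ((1+x)^d − x^d)^2 dx is finite. -/
open MeasureTheory Set Real

/-- For `0 < d < 1/2`, the integral `∫_0^∞ ((1+x)^d − x^d)^2 dx` is finite. -/
theorem integrable_sq_diff_rpow (d : ℝ) (hd0 : 0 < d) (hd : d < 1 / 2) :
    MeasureTheory.IntegrableOn (fun x : ℝ => ((1 + x) ^ d - x ^ d) ^ 2) (Set.Ioi 0) := by
  have hcd : Continuous fun x : ℝ => x ^ d := by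
    rw [continuous_iff_continuousAt]
    exact fun x => Real.continuousAt_rpow_const _ _ (Or.inr hd0.le)
  have hmeas : Measurable fun x : ℝ => ((1 + x) ^ d - x ^ d) ^ 2 :=
    (((hcd.comp (continuous_const.add continuous_id)).sub hcd).pow 2).measurable
  have h01 : IntegrableOn (fun x : ℝ => ((1 + x) ^ d - x ^ d) ^ 2) (Ioc 0 1) := by
    have hcont : ContinuousOn (fun x : ℝ => ((1 + x) ^ d - x ^ d) ^ 2) (Icc 0 1) := by
      apply ContinuousOn.pow
      apply ContinuousOn.sub
      · exact fun x hx => ((Real.continuousAt_rpow_const _ _ (Or.inr hd0.le)).comp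
          (by continuity : Continuous fun x : ℝ => 1 + x).continuousAt).continuousWithinAt
      · exact fun x hx => (Real.continuousAt_rpow_const _ _ (Or.inr hd0.le)).continuousWithinAt
    exact (hcont.integrableOn_Icc).mono_set Ioc_subset_Icc_self
  have h1i : IntegrableOn (fun x : ℝ => ((1 + x) ^ d - x ^ d) ^ 2) (Ioi 1) := by
    have hg : IntegrableOn (fun x : ℝ => d ^ 2 * x ^ (2 * d - 2)) (Ioi 1) :=
      (integrableOn_Ioi_rpow_of_lt (by linarith) one_pos).const_mul _
    refine Integrable.mono' hg (hmeas.aestronglyMeasurable.restrict) ?_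
    filter_upwards [ae_restrict_mem measurableSet_Ioi] with x hx
    have hx1 : (1 : ℝ) < x := hx
    have hx0 : (0 : ℝ) < x := by linarith
    have hnn : 0 ≤ (1 + x) ^ d - x ^ d := by
      have := Real.rpow_le_rpow hx0.le (by linarith : x ≤ 1 + x) hd0.le
      linarith
    have key : (1 + x) ^ d - x ^ d ≤ d * x ^ (d - 1) := by
      have h1 : (1 + x) ^ d = x ^ d * (1 + x⁻¹) ^ d := by
        rw [← Real.mul_rpow hx0.le (by positivity)]
        rw [mul_add, mul_one, mul_inv_cancel₀ hx0.ne', add_comm]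
      have h2 : (1 + x⁻¹) ^ d ≤ 1 + d * x⁻¹ :=
        rpow_one_add_le_one_add_mul_self (by linarith [inv_nonneg.mpr hx0.le]) hd0.le (by linarith)
      have h3 : x ^ d * (1 + x⁻¹) ^ d ≤ x ^ d * (1 + d * x⁻¹) := by
        apply mul_le_mul_of_nonneg_left h2 (Real.rpow_nonneg hx0.le d)
      have h4 : x ^ (d - 1) = x ^ d * x⁻¹ := by
        rw [Real.rpow_sub hx0, Real.rpow_one, div_eq_mul_inv]
      rw [h1, h4]
      nlinarith [Real.rpow_nonneg hx0.le d]
    rw [Real.norm_eq_abs, abs_of_nonneg (sq_nonneg _)]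
    have h2d : x ^ (2 * d - 2) = (x ^ (d - 1)) ^ 2 := by
      rw [← Real.rpow_natCast (x ^ (d - 1)) 2, ← Real.rpow_mul hx0.le]
      norm_num; ring_nf
    rw [h2d]
    calc ((1 + x) ^ d - x ^ d) ^ 2 ≤ (d * x ^ (d - 1)) ^ 2 := by
          apply pow_le_pow_left₀ hnn key 2
      _ = d ^ 2 * (x ^ (d - 1)) ^ 2 := by ring
  have : Ioi (0 : ℝ) = Ioc 0 1 ∪ Ioi 1 := (Ioc_union_Ioi_eq_Ioi (by norm_num)).symm
  rw [this]
  exact h01.union h1i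
end

section
/- For 0 < d < 1/2, the integral ∫_0^∞ ((1+x)^d − x^d)^3 dx is finite. -/
open MeasureTheory Set Real

/-- For `0 < d < 1/2`, the integral `∫_0^∞ ((1+x)^d − x^d)^3 dx` is finite. -/
theorem integrable_cube_diff_rpow (d : ℝ) (hd0 : 0 < d) (hd : d < 1 / 2) :
    MeasureTheory.IntegrableOn (fun x : ℝ => ((1 + x) ^ d - x ^ d) ^ 3) (Set.Ioi 0) := by
  have hcont : Continuous fun x : ℝ => ((1 + x) ^ d - x ^ d) ^ 3 := by
    have h1 : Continuous fun x : ℝ => x ^ d := by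
      apply continuous_iff_continuousAt.mpr
      intro x
      exact Real.continuousAt_rpow_const x d (Or.inr hd0.le)
    exact ((h1.comp (continuous_const.add continuous_id)).sub h1).pow 3
  have h01 : IntegrableOn (fun x : ℝ => ((1 + x) ^ d - x ^ d) ^ 3) (Ioc 0 1) := by
    exact (hcont.continuousOn.integrableOn_Icc (a := 0) (b := 1)).mono_set Ioc_subset_Icc_self
  have h1i : IntegrableOn (fun x : ℝ => ((1 + x) ^ d - x ^ d) ^ 3) (Ioi 1) := by
    have hg : IntegrableOn (fun x : ℝ => d ^ 3 * x ^ (3 * d - 3)) (Ioi 1) :=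
      (integrableOn_Ioi_rpow_of_lt (by linarith) one_pos).const_mul _
    apply Integrable.mono hg hcont.aestronglyMeasurable.restrict
    filter_upwards [ae_restrict_mem measurableSet_Ioi] with x hx
    have hx1 : (1 : ℝ) < x := hx
    have hx0 : (0 : ℝ) < x := by linarith
    have hnn : 0 ≤ (1 + x) ^ d - x ^ d := by
      have := Real.rpow_le_rpow hx0.le (by linarith : x ≤ 1 + x) hd0.le
      linarith
    have hkey : (1 + x) ^ d - x ^ d ≤ d * x ^ (d - 1) := by
      have h1x : (1 + x) ^ d = x ^ d * (1 + 1 / x) ^ d := by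
        rw [← Real.mul_rpow hx0.le (by positivity)]
        congr 1
        field_simp
        ring
      have hber : (1 + 1 / x) ^ d ≤ 1 + d * (1 / x) :=
        rpow_one_add_le_one_add_mul_self (le_trans (by norm_num) (by positivity : (0:ℝ) ≤ 1 / x)) hd0.le (by linarith)
      have : (1 + x) ^ d ≤ x ^ d * (1 + d * (1 / x)) := by
        rw [h1x]
        exact mul_le_mul_of_nonneg_left hber (Real.rpow_nonneg hx0.le _)
      have hxd1 : x ^ d * (1 / x) = x ^ (d - 1) := by
        rw [Real.rpow_sub hx0, Real.rpow_one]
        ring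
      nlinarith [Real.rpow_nonneg hx0.le d]
    have hub : ((1 + x) ^ d - x ^ d) ^ 3 ≤ d ^ 3 * x ^ (3 * d - 3) := by
      have : ((1 + x) ^ d - x ^ d) ^ 3 ≤ (d * x ^ (d - 1)) ^ 3 :=
        pow_le_pow_left₀ hnn hkey 3
      calc ((1 + x) ^ d - x ^ d) ^ 3 ≤ (d * x ^ (d - 1)) ^ 3 := this
        _ = d ^ 3 * (x ^ (d - 1)) ^ 3 := by ring
        _ = d ^ 3 * x ^ (3 * d - 3) := by
            rw [← Real.rpow_natCast (x ^ (d - 1)) 3, ← Real.rpow_mul hx0.le]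
            congr 1
            push_cast
            ring
    rw [Real.norm_eq_abs, Real.norm_eq_abs, abs_of_nonneg (pow_nonneg hnn 3),
      abs_of_nonneg (by positivity)]
    exact hub
  have : Ioc (0:ℝ) 1 ∪ Ioi 1 = Ioi 0 := Ioc_union_Ioi_eq_Ioi (by norm_num)
  rw [← this]
  exact h01.union h1i
end

section
/- Let 0 < d < 1/2. Then n^{−(2d+1)} · ∑_{j=1}^{∞} ((n+j)^d − (j+1)^d)^2 → ∫_0^∞ ((1+x)^d − x^d)^2 dx as n → ∞. -/
open Filter MeasureTheory Set Topology

namespace TailSumAux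

/-- The rescaled step function whose integral over `Ioi 0` equals the scaled sum. -/
noncomputable def F (d : ℝ) (n : ℕ) (x : ℝ) : ℝ :=
  ((1 + ((⌊(n : ℝ) * x⌋₊ : ℝ) + 1) / n) ^ d - (((⌊(n : ℝ) * x⌋₊ : ℝ) + 2) / n) ^ d) ^ 2

/-- The limit integrand. -/
noncomputable def g (d : ℝ) (x : ℝ) : ℝ := ((1 + x) ^ d - x ^ d) ^ 2

variable {d : ℝ}

lemma phi_anti (hd0 : 0 < d) (hd1 : d ≤ 1) :
    AntitoneOn (fun x : ℝ => (1 + x) ^ d - x ^ d) (Ici 0) := by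
  have hderiv : ∀ x : ℝ, 0 < x →
      HasDerivAt (fun y : ℝ => (1 + y) ^ d - y ^ d)
        (d * (1 + x) ^ (d - 1) - d * x ^ (d - 1)) x := by
    intro x hx
    have h1 : HasDerivAt (fun y : ℝ => (1 + y) ^ d) (d * (1 + x) ^ (d - 1)) x := by
      have := (Real.hasDerivAt_rpow_const (x := 1 + x) (p := d)
        (Or.inl (by positivity))).comp x ((hasDerivAt_id x).const_add 1)
      simpa [Function.comp_def] using this
    exact h1.sub (Real.hasDerivAt_rpow_const (Or.inl hx.ne'))
  apply antitoneOn_of_deriv_nonpos (convex_Ici 0)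
  · exact ((Real.continuous_rpow_const hd0.le).comp
      (continuous_const.add continuous_id)).continuousOn.sub
      (Real.continuous_rpow_const hd0.le).continuousOn
  · intro x hx
    rw [interior_Ici] at hx
    exact (hderiv x hx).differentiableAt.differentiableWithinAt
  · intro x hx
    rw [interior_Ici] at hx
    rw [(hderiv x hx).deriv]
    have : (1 + x) ^ (d - 1) ≤ x ^ (d - 1) :=
      Real.rpow_le_rpow_of_nonpos hx (by linarith) (by linarith)
    nlinarith

lemma bracket_nonneg (hd0 : 0 < d) {x : ℝ} (hx : 0 ≤ x) : 0 ≤ (1 + x) ^ d - x ^ d :=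
  sub_nonneg.2 (Real.rpow_le_rpow hx (by linarith) hd0.le)

lemma bracket_le (hd0 : 0 < d) (hd1 : d ≤ 1) {x : ℝ} (hx : 0 < x) :
    (1 + x) ^ d - x ^ d ≤ d * x ^ (d - 1) := by
  have hxi : (0:ℝ) ≤ x⁻¹ := by positivity
  have h1 : (1 : ℝ) + x = x * (1 + x⁻¹) := by field_simp; ring
  have hb : (1 + x⁻¹) ^ d ≤ 1 + d * x⁻¹ :=
    rpow_one_add_le_one_add_mul_self (by linarith) hd0.le hd1
  have hxd : (0:ℝ) < x ^ d := Real.rpow_pos_of_pos hx d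
  have h2 : (1 + x) ^ d = x ^ d * (1 + x⁻¹) ^ d := by
    rw [h1, Real.mul_rpow hx.le (by positivity)]
  have h3 : x ^ d * x⁻¹ = x ^ (d - 1) := by
    rw [Real.rpow_sub_one hx.ne' d, div_eq_mul_inv]
  calc (1 + x) ^ d - x ^ d = x ^ d * (1 + x⁻¹) ^ d - x ^ d := by rw [h2]
    _ ≤ x ^ d * (1 + d * x⁻¹) - x ^ d := by nlinarith
    _ = d * (x ^ d * x⁻¹) := by ring
    _ = d * x ^ (d - 1) := by rw [h3]

lemma g_meas (hd0 : 0 < d) : Measurable (g d) := by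
  have h : Continuous fun x : ℝ => x ^ d := Real.continuous_rpow_const hd0.le
  exact (((h.comp (continuous_const.add continuous_id)).sub h).pow 2).measurable

lemma g_integrable (hd0 : 0 < d) (hd : d < 1 / 2) : IntegrableOn (g d) (Ioi 0) := by
  have hd1 : d ≤ 1 := by linarith
  have hsplit : Ioi (0:ℝ) = Ioc 0 1 ∪ Ioi 1 := (Ioc_union_Ioi_eq_Ioi zero_le_one).symm
  rw [hsplit]
  apply IntegrableOn.union
  · apply Measure.integrableOn_of_bounded (M := 4) (by simp)
      (g_meas hd0).aestronglyMeasurable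
    filter_upwards [ae_restrict_mem measurableSet_Ioc] with x hx
    have hx0 : (0:ℝ) < x := hx.1
    have h1 : (1 + x) ^ d ≤ 1 + d * x :=
      rpow_one_add_le_one_add_mul_self (by linarith) hd0.le hd1
    have h2 : 0 ≤ (1 + x) ^ d - x ^ d := bracket_nonneg hd0 hx0.le
    have h3 : (1 + x) ^ d - x ^ d ≤ 2 := by
      have : (0:ℝ) ≤ x ^ d := Real.rpow_nonneg hx0.le d
      nlinarith [hx.2]
    have h4 : g d x ≤ 4 := by
      have := mul_self_le_mul_self h2 h3
      have h5 : ((1 + x) ^ d - x ^ d) ^ 2 ≤ 2 * 2 := by rw [sq]; exact this.trans (by nlinarith)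
      simpa [g] using h5.trans_eq (by norm_num)
    rw [Real.norm_eq_abs, abs_of_nonneg (sq_nonneg _)]
    exact h4
  · have hint : IntegrableOn (fun x : ℝ => d ^ 2 * x ^ (2 * d - 2)) (Ioi 1) :=
      (integrableOn_Ioi_rpow_of_lt (by linarith) one_pos).const_mul _
    apply hint.integrable.mono' (g_meas hd0).aestronglyMeasurable
    filter_upwards [ae_restrict_mem measurableSet_Ioi] with x hx
    have hx0 : (0:ℝ) < x := lt_trans one_pos hx
    have h2 : 0 ≤ (1 + x) ^ d - x ^ d := bracket_nonneg hd0 hx0.le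
    have h3 : (1 + x) ^ d - x ^ d ≤ d * x ^ (d - 1) := bracket_le hd0 hd1 hx0
    have hsq : ((1 + x) ^ d - x ^ d) ^ 2 ≤ (d * x ^ (d - 1)) ^ 2 :=
      pow_le_pow_left₀ h2 h3 2
    have he : (d * x ^ (d - 1)) ^ 2 = d ^ 2 * x ^ (2 * d - 2) := by
      rw [mul_pow, ← Real.rpow_natCast (x ^ (d - 1)) 2, ← Real.rpow_mul hx0.le]
      congr 1
      push_cast
      ring
    rw [Real.norm_eq_abs, abs_of_nonneg (sq_nonneg _)]
    calc g d x ≤ (d * x ^ (d - 1)) ^ 2 := hsq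
      _ = d ^ 2 * x ^ (2 * d - 2) := he

lemma F_meas (hd0 : 0 < d) (n : ℕ) : Measurable (F d n) := by
  have h : Continuous fun x : ℝ => x ^ d := Real.continuous_rpow_const hd0.le
  have hfl : Measurable fun x : ℝ => ((⌊(n : ℝ) * x⌋₊ : ℕ) : ℝ) :=
    measurable_from_top.comp (Nat.measurable_floor.comp (measurable_const_mul _))
  apply Measurable.pow_const
  apply Measurable.sub
  · exact h.measurable.comp (measurable_const.add ((hfl.add measurable_const).div_const _))
  · exact h.measurable.comp ((hfl.add measurable_const).div_const _)

/-- Domination: for `n ≥ 1` and `x > 0`, `F d n x ≤ g d x`. -/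
lemma F_le_g (hd0 : 0 < d) (hd1 : d ≤ 1) {n : ℕ} (hn : 1 ≤ n) {x : ℝ} (hx : 0 < x) :
    F d n x ≤ g d x := by
  have hn0 : (0:ℝ) < n := by exact_mod_cast hn
  set k : ℕ := ⌊(n : ℝ) * x⌋₊ with hk
  set u : ℝ := ((k : ℝ) + 1) / n with hu
  have hxu : x ≤ u := by
    rw [hu, le_div_iff₀ hn0]
    have := Nat.lt_floor_add_one ((n : ℝ) * x)
    rw [← hk] at this
    linarith
  have hu0 : 0 ≤ u := le_trans hx.le hxu
  have h1n0 : (0:ℝ) < 1 / n := by positivity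
  have h2n : ((k : ℝ) + 2) / n = u + 1 / n := by
    rw [hu]; field_simp; ring
  have h1n : (1:ℝ) / n ≤ 1 := by
    rw [div_le_one hn0]; exact_mod_cast hn
  have hb0 : 0 ≤ (1 + u) ^ d - (u + 1 / n) ^ d := by
    apply sub_nonneg.2
    apply Real.rpow_le_rpow (by linarith) (by linarith) hd0.le
  have hb1 : (1 + u) ^ d - (u + 1 / n) ^ d ≤ (1 + u) ^ d - u ^ d := by
    have : u ^ d ≤ (u + 1 / n) ^ d :=
      Real.rpow_le_rpow hu0 (by linarith) hd0.le
    linarith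
  have hb2 : (1 + u) ^ d - u ^ d ≤ (1 + x) ^ d - x ^ d :=
    phi_anti hd0 hd1 (mem_Ici.2 hx.le) (mem_Ici.2 hu0) hxu
  have h := pow_le_pow_left₀ hb0 (le_trans hb1 hb2) 2
  simpa [F, g, ← hk, h2n] using h

lemma F_nonneg (d : ℝ) (n : ℕ) (x : ℝ) : 0 ≤ F d n x := sq_nonneg _

/-- Pointwise convergence. -/
lemma F_tendsto (hd0 : 0 < d) {x : ℝ} (hx : 0 < x) :
    Tendsto (fun n : ℕ => F d n x) atTop (𝓝 (g d x)) := by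
  have hu : Tendsto (fun n : ℕ => ((⌊(n : ℝ) * x⌋₊ : ℝ) + 1) / n) atTop (𝓝 x) := by
    apply tendsto_of_tendsto_of_tendsto_of_le_of_le'
      (tendsto_const_nhds : Tendsto (fun _ : ℕ => x) atTop (𝓝 x))
      (show Tendsto (fun n : ℕ => x + 1 / (n:ℝ)) atTop (𝓝 x) by
        simpa using tendsto_const_nhds.add (tendsto_one_div_atTop_nhds_zero_nat : Tendsto (fun n : ℕ => 1 / (n:ℝ)) atTop (𝓝 0)))
    · filter_upwards [eventually_ge_atTop 1] with n hn
      have hn0 : (0:ℝ) < n := by exact_mod_cast hn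
      rw [le_div_iff₀ hn0]
      have := Nat.lt_floor_add_one ((n : ℝ) * x)
      linarith
    · filter_upwards [eventually_ge_atTop 1] with n hn
      have hn0 : (0:ℝ) < n := by exact_mod_cast hn
      rw [div_le_iff₀ hn0]
      have h1 : (⌊(n : ℝ) * x⌋₊ : ℝ) ≤ (n : ℝ) * x := Nat.floor_le (by positivity)
      have h2 : (x + 1 / (n:ℝ)) * n = x * n + 1 := by field_simp
      rw [h2]; linarith
  have hu2 : Tendsto (fun n : ℕ => ((⌊(n : ℝ) * x⌋₊ : ℝ) + 2) / n) atTop (𝓝 x) := by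
    have hereq : (fun n : ℕ => ((⌊(n : ℝ) * x⌋₊ : ℝ) + 2) / n)
        =ᶠ[atTop] fun n : ℕ => ((⌊(n : ℝ) * x⌋₊ : ℝ) + 1) / n + 1 / n := by
      filter_upwards [eventually_ge_atTop 1] with n hn
      have hn0 : (0:ℝ) < n := by exact_mod_cast hn
      field_simp
      ring
    rw [tendsto_congr' hereq]
    simpa using hu.add tendsto_one_div_atTop_nhds_zero_nat
  have h1 : Tendsto (fun n : ℕ => (1 + ((⌊(n : ℝ) * x⌋₊ : ℝ) + 1) / n) ^ d)
      atTop (𝓝 ((1 + x) ^ d)) :=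
    (tendsto_const_nhds.add hu).rpow_const (Or.inl (by positivity))
  have h2 : Tendsto (fun n : ℕ => (((⌊(n : ℝ) * x⌋₊ : ℝ) + 2) / n) ^ d)
      atTop (𝓝 (x ^ d)) :=
    hu2.rpow_const (Or.inl hx.ne')
  exact (h1.sub h2).pow 2

/-- The identity: the scaled tail sum equals the integral of the step function. -/
lemma sum_eq_integral (hd0 : 0 < d) (hd : d < 1 / 2) {n : ℕ} (hn : 1 ≤ n) :
    (n : ℝ) ^ (-(2 * d + 1)) *
      ∑' j : ℕ, (((n : ℝ) + ((j : ℝ) + 1)) ^ d - (((j : ℝ) + 1) + 1) ^ d) ^ 2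
      = ∫ x in Ioi (0:ℝ), F d n x := by
  have hd1 : d ≤ 1 := by linarith
  have hn0 : (0:ℝ) < n := by exact_mod_cast hn
  have hFint : IntegrableOn (F d n) (Ioi 0) := by
    apply (g_integrable hd0 hd).integrable.mono' (F_meas hd0 n).aestronglyMeasurable
    filter_upwards [ae_restrict_mem measurableSet_Ioi] with x hx
    rw [Real.norm_eq_abs, abs_of_nonneg (F_nonneg d n x)]
    exact F_le_g hd0 hd1 hn hx
  have hcover : Ici (0:ℝ) = ⋃ j : ℕ, Ico ((j : ℝ) / n) (((j : ℝ) + 1) / n) := by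
    ext x
    simp only [mem_Ici, mem_iUnion, mem_Ico]
    constructor
    · intro hx
      refine ⟨⌊(n : ℝ) * x⌋₊, ?_, ?_⟩
      · rw [div_le_iff₀ hn0]
        have := Nat.floor_le (show (0:ℝ) ≤ (n : ℝ) * x by positivity)
        linarith
      · rw [lt_div_iff₀ hn0]
        have := Nat.lt_floor_add_one ((n : ℝ) * x)
        linarith
    · rintro ⟨j, hj1, _⟩
      have : (0:ℝ) ≤ (j : ℝ) / n := by positivity
      linarith
  have hdisj : Pairwise (Function.onFun Disjoint
      fun j : ℕ => Ico ((j : ℝ) / n) (((j : ℝ) + 1) / n)) := by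
    have key : ∀ i j : ℕ, i < j →
        Disjoint (Ico ((i : ℝ) / n) (((i : ℝ) + 1) / n))
          (Ico ((j : ℝ) / n) (((j : ℝ) + 1) / n)) := by
      intro i j h
      apply Set.disjoint_left.2
      intro x hxi hxj
      have hij : ((i : ℝ) + 1) ≤ (j : ℝ) := by exact_mod_cast Nat.succ_le_of_lt h
      have h1 : ((i : ℝ) + 1) / n ≤ (j : ℝ) / n := by gcongr
      exact absurd (lt_of_lt_of_le hxi.2 (h1.trans hxj.1)) (lt_irrefl x)
    intro i j hij
    rcases hij.lt_or_gt with h | h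
    · exact key i j h
    · exact (key j i h).symm
  have hFintIci : IntegrableOn (F d n) (Ici 0) :=
    (integrableOn_Ici_iff_integrableOn_Ioi (by exact enorm_ne_top)).2 hFint
  have hstep : ∫ x in Ioi (0:ℝ), F d n x
      = ∑' j : ℕ, ∫ x in Ico ((j : ℝ) / n) (((j : ℝ) + 1) / n), F d n x := by
    rw [← integral_Ici_eq_integral_Ioi, hcover]
    exact integral_iUnion (fun j => measurableSet_Ico) hdisj (hcover ▸ hFintIci)
  have hcell : ∀ j : ℕ, ∫ x in Ico ((j : ℝ) / n) (((j : ℝ) + 1) / n), F d n x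
      = (n : ℝ) ^ (-(2 * d + 1)) *
        (((n : ℝ) + ((j : ℝ) + 1)) ^ d - (((j : ℝ) + 1) + 1) ^ d) ^ 2 := by
    intro j
    set c : ℝ := ((1 + ((j : ℝ) + 1) / n) ^ d - (((j : ℝ) + 2) / n) ^ d) ^ 2 with hc
    have hconst : ∀ x ∈ Ico ((j : ℝ) / n) (((j : ℝ) + 1) / n), F d n x = c := by
      intro x hx
      have hjx : (j : ℝ) ≤ (n : ℝ) * x := by
        have := (div_le_iff₀ hn0).1 hx.1
        nlinarith
      have hx0 : (0:ℝ) ≤ (n : ℝ) * x := le_trans (Nat.cast_nonneg j) hjx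
      have hfl : ⌊(n : ℝ) * x⌋₊ = j := by
        rw [Nat.floor_eq_iff hx0]
        refine ⟨hjx, ?_⟩
        have := hx.2
        rw [lt_div_iff₀ hn0] at this
        linarith
      simp only [F, hfl, hc]
    have hvol : (volume (Ico ((j : ℝ) / n) (((j : ℝ) + 1) / n))).toReal = 1 / n := by
      rw [Real.volume_Ico, show ((j:ℝ) + 1) / n - (j:ℝ) / n = 1 / n by field_simp; ring,
        ENNReal.toReal_ofReal (by positivity)]
    rw [setIntegral_congr_fun measurableSet_Ico hconst, setIntegral_const, measureReal_def, hvol, smul_eq_mul]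
    -- now algebra
    have hnd : (0:ℝ) < (n:ℝ) ^ d := Real.rpow_pos_of_pos hn0 d
    have e1 : (1 + ((j : ℝ) + 1) / n) = ((n : ℝ) + ((j : ℝ) + 1)) / n := by field_simp
    have e2 : (1 + ((j : ℝ) + 1) / n) ^ d
        = ((n : ℝ) + ((j : ℝ) + 1)) ^ d / (n : ℝ) ^ d := by
      rw [e1, Real.div_rpow (by positivity) hn0.le]
    have e3 : (((j : ℝ) + 2) / n) ^ d = ((j : ℝ) + 2) ^ d / (n : ℝ) ^ d := by
      rw [Real.div_rpow (by positivity) hn0.le]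
    have e4 : (n : ℝ) ^ (-(2 * d + 1)) = ((n:ℝ) * ((n:ℝ) ^ d) ^ 2)⁻¹ := by
      rw [Real.rpow_neg hn0.le]
      congr 1
      rw [← Real.rpow_natCast ((n:ℝ) ^ d) 2, ← Real.rpow_mul hn0.le]
      rw [← Real.rpow_one_add' hn0.le (by push_cast; nlinarith)]
      congr 1
      push_cast
      ring
    have e5 : ((j : ℝ) + 2) = (((j : ℝ) + 1) + 1) := by ring
    rw [hc, e2, e3, e5, div_sub_div_same, div_pow, e4]
    field_simp
  rw [hstep]
  rw [tsum_congr hcell, tsum_mul_left]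

end TailSumAux

open Filter

/-- For `0 < d < 1/2`,
`n^{−(2d+1)} ∑_{j=1}^∞ ((n+j)^d − (j+1)^d)^2 → ∫_0^∞ ((1+x)^d − x^d)^2 dx`. -/
theorem tail_sum_to_integral (d : ℝ) (hd0 : 0 < d) (hd : d < 1 / 2) :
    Tendsto
      (fun n : ℕ => (n : ℝ) ^ (-(2 * d + 1)) *
        ∑' j : ℕ, (((n : ℝ) + ((j : ℝ) + 1)) ^ d - (((j : ℝ) + 1) + 1) ^ d) ^ 2)
      atTop (nhds (∫ x in Set.Ioi (0 : ℝ), ((1 + x) ^ d - x ^ d) ^ 2)) := by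
  classical
  have hd1 : d ≤ 1 := by linarith
  have key : Tendsto (fun n : ℕ => ∫ x in Set.Ioi (0:ℝ), TailSumAux.F d (n + 1) x)
      atTop (𝓝 (∫ x in Set.Ioi (0:ℝ), TailSumAux.g d x)) := by
    apply MeasureTheory.tendsto_integral_of_dominated_convergence (TailSumAux.g d)
    · exact fun n => (TailSumAux.F_meas hd0 (n + 1)).aestronglyMeasurable
    · exact TailSumAux.g_integrable hd0 hd
    · intro n
      filter_upwards [MeasureTheory.ae_restrict_mem measurableSet_Ioi] with x hx
      rw [Real.norm_eq_abs, abs_of_nonneg (TailSumAux.F_nonneg d (n + 1) x)]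
      exact TailSumAux.F_le_g hd0 hd1 (Nat.le_add_left 1 n) hx
    · filter_upwards [MeasureTheory.ae_restrict_mem measurableSet_Ioi] with x hx
      exact (TailSumAux.F_tendsto hd0 hx).comp (tendsto_add_atTop_nat 1)
  have key2 : Tendsto (fun n : ℕ => ((n + 1 : ℕ) : ℝ) ^ (-(2 * d + 1)) *
      ∑' j : ℕ, ((((n + 1 : ℕ) : ℝ) + ((j : ℝ) + 1)) ^ d - (((j : ℝ) + 1) + 1) ^ d) ^ 2)
      atTop (𝓝 (∫ x in Set.Ioi (0:ℝ), TailSumAux.g d x)) := by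
    apply key.congr'
    filter_upwards with n
    exact (TailSumAux.sum_eq_integral hd0 hd (Nat.le_add_left 1 n)).symm
  exact (tendsto_add_atTop_iff_nat
    (f := fun n : ℕ => (n : ℝ) ^ (-(2 * d + 1)) *
      ∑' j : ℕ, (((n : ℝ) + ((j : ℝ) + 1)) ^ d - (((j : ℝ) + 1) + 1) ^ d) ^ 2) 1).1 key2
end

section
/- Let (a_i)_{i≥0} be an absolutely summable real sequence. Then ∑_{j=1}^{∞} (∑_{t=1}^{n} a_{t+j})^2 = o(n) as n → ∞. -/
open Filter

/-- For an absolutely summable sequence `a`,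
`∑_{j=1}^∞ (∑_{t=1}^n a_{t+j})^2 = o(n)` as `n → ∞`. -/
theorem tail_square_sum_little_o (a : ℕ → ℝ) (hsum : Summable fun i => |a i|) :
    Tendsto
      (fun n : ℕ => (1 / (n : ℝ)) * ∑' j : ℕ, (∑ t ∈ Finset.Icc 1 n, a (t + (j + 1))) ^ 2)
      atTop (nhds 0) := by
  set A := ∑' i, |a i| with hAdef
  have hA0 : 0 ≤ A := tsum_nonneg fun i => abs_nonneg _
  have hshift : ∀ m : ℕ, Summable fun j => |a (j + m)| :=
    fun m => (summable_nat_add_iff m).mpr hsum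
  set r : ℕ → ℝ := fun t => ∑' j, |a (j + (t + 1))| with hrdef
  have hr0 : ∀ t, 0 ≤ r t := fun t => tsum_nonneg fun j => abs_nonneg _
  have hrt : Tendsto r atTop (nhds 0) := by
    have h1 : Tendsto (fun i => ∑' k, |a (k + i)|) atTop (nhds 0) :=
      tendsto_sum_nat_add fun i => |a i|
    exact h1.comp (tendsto_add_atTop_nat 1)
  -- b n j : the absolute partial sum
  set b : ℕ → ℕ → ℝ := fun n j => ∑ t ∈ Finset.Icc 1 n, |a (t + (j + 1))| with hbdef
  have hb0 : ∀ n j, 0 ≤ b n j := fun n j => Finset.sum_nonneg fun t _ => abs_nonneg _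
  have hbA : ∀ n j, b n j ≤ A := by
    intro n j
    have : b n j = ∑ i ∈ (Finset.Icc 1 n).image (fun t => t + (j + 1)), |a i| := by
      rw [Finset.sum_image fun x _ y _ h => Nat.add_right_cancel h]
    rw [this]
    exact Summable.sum_le_tsum _ (fun i _ => abs_nonneg _) hsum
  -- summability of each column
  have hcol : ∀ t : ℕ, Summable fun j => |a (t + (j + 1))| := by
    intro t
    refine (hshift (t + 1)).congr fun j => ?_
    rw [show j + (t + 1) = t + (j + 1) by omega]
  have hbsummable : ∀ n : ℕ, Summable (b n) := fun n =>
    summable_sum fun t _ => hcol t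
  -- summability of squares
  have hsq_le : ∀ n j, (∑ t ∈ Finset.Icc 1 n, a (t + (j + 1))) ^ 2 ≤ A * b n j := by
    intro n j
    have habs : |∑ t ∈ Finset.Icc 1 n, a (t + (j + 1))| ≤ b n j :=
      Finset.abs_sum_le_sum_abs _ _
    calc (∑ t ∈ Finset.Icc 1 n, a (t + (j + 1))) ^ 2
        = |∑ t ∈ Finset.Icc 1 n, a (t + (j + 1))| ^ 2 := (sq_abs _).symm
      _ ≤ b n j ^ 2 := by
          apply pow_le_pow_left₀ (abs_nonneg _) habs
      _ = b n j * b n j := pow_two (b n j)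
      _ ≤ A * b n j := mul_le_mul_of_nonneg_right (hbA n j) (hb0 n j)
  have hsqsummable : ∀ n : ℕ,
      Summable fun j => (∑ t ∈ Finset.Icc 1 n, a (t + (j + 1))) ^ 2 := by
    intro n
    refine Summable.of_nonneg_of_le (fun j => sq_nonneg _) (hsq_le n)
      (((hbsummable n).mul_left A))
  -- the tsum of b equals the finite sum of tails
  have htsumb : ∀ n : ℕ, ∑' j, b n j = ∑ i ∈ Finset.range n, r (i + 1) := by
    intro n
    rw [hbdef]
    rw [Summable.tsum_finsetSum fun t _ => hcol t, ← Finset.Ico_add_one_right_eq_Icc, Finset.sum_Ico_eq_sum_range]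
    apply Finset.sum_congr rfl
    intro i _
    simp only [hrdef]
    apply tsum_congr
    intro j
    exact congrArg (fun m => |a m|) (by omega)
  -- main bound
  have hbound : ∀ n : ℕ,
      (1 / (n : ℝ)) * ∑' j : ℕ, (∑ t ∈ Finset.Icc 1 n, a (t + (j + 1))) ^ 2
        ≤ A * ((n : ℝ)⁻¹ * ∑ i ∈ Finset.range n, r (i + 1)) := by
    intro n
    have h1 : ∑' j : ℕ, (∑ t ∈ Finset.Icc 1 n, a (t + (j + 1))) ^ 2
        ≤ A * ∑ i ∈ Finset.range n, r (i + 1) := by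
      calc ∑' j : ℕ, (∑ t ∈ Finset.Icc 1 n, a (t + (j + 1))) ^ 2
          ≤ ∑' j, A * b n j :=
            Summable.tsum_le_tsum (hsq_le n) (hsqsummable n) ((hbsummable n).mul_left A)
        _ = A * ∑' j, b n j := tsum_mul_left
        _ = A * ∑ i ∈ Finset.range n, r (i + 1) := by rw [htsumb n]
    have h2 : (0 : ℝ) ≤ 1 / (n : ℝ) := by positivity
    calc (1 / (n : ℝ)) * ∑' j : ℕ, (∑ t ∈ Finset.Icc 1 n, a (t + (j + 1))) ^ 2
        ≤ (1 / (n : ℝ)) * (A * ∑ i ∈ Finset.range n, r (i + 1)) :=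
          mul_le_mul_of_nonneg_left h1 h2
      _ = A * ((n : ℝ)⁻¹ * ∑ i ∈ Finset.range n, r (i + 1)) := by
          rw [one_div]; ring
  -- Cesàro
  have hces : Tendsto (fun n : ℕ => (n : ℝ)⁻¹ * ∑ i ∈ Finset.range n, r (i + 1))
      atTop (nhds 0) := by
    have : Tendsto (fun i : ℕ => r (i + 1)) atTop (nhds 0) :=
      hrt.comp (tendsto_add_atTop_nat 1)
    exact this.cesaro
  have hg : Tendsto (fun n : ℕ => A * ((n : ℝ)⁻¹ * ∑ i ∈ Finset.range n, r (i + 1)))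
      atTop (nhds 0) := by
    simpa using hces.const_mul A
  refine squeeze_zero (fun n => ?_) hbound hg
  have : (0 : ℝ) ≤ ∑' j : ℕ, (∑ t ∈ Finset.Icc 1 n, a (t + (j + 1))) ^ 2 :=
    tsum_nonneg fun j => sq_nonneg _
  positivity
end

section
/- For the function k(d) defined by k(d) = (1/(1+3d) + ∫_0^∞ ((1+x)^d − x^d)^3 dx)/(1/(1+2d) + ∫_0^∞ ((1+x)^d − x^d)^2 dx)^{3/2}, the limit as d → 1/2 (from below) is 0. -/
open Real Set MeasureTheory

lemma amgm {u d : ℝ} (hu : 0 ≤ u) (hd0 : 0 ≤ d) (hd1 : d ≤ 1) :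
    u ^ d ≤ (1 - d) + d * u := by
  have := Real.geom_mean_le_arith_mean2_weighted (by linarith : (0:ℝ) ≤ 1 - d) hd0
    zero_le_one hu (by ring)
  simpa [Real.one_rpow] using this

lemma F_nonneg {x d : ℝ} (hx : 0 ≤ x) (hd : 0 ≤ d) : 0 ≤ (1 + x) ^ d - x ^ d :=
  sub_nonneg.2 (Real.rpow_le_rpow hx (by linarith) hd)

lemma F_upper {x d : ℝ} (hx : 0 < x) (hd0 : 0 ≤ d) (hd1 : d ≤ 1) :
    (1 + x) ^ d ≤ x ^ d + d * x ^ (d - 1) := by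
  have h1 : ((1 + x) / x) ^ d ≤ 1 + d / x := by
    have h := amgm (u := (1+x)/x) (d := d) (by positivity) hd0 hd1
    have hq : (1 - d) + d * ((1+x)/x) = 1 + d / x := by field_simp; ring
    linarith [hq ▸ h]
  have h2 : (1 + x) ^ d = x ^ d * ((1+x)/x) ^ d := by
    rw [← Real.mul_rpow hx.le (by positivity)]
    congr 1; field_simp
  rw [h2]
  have h3 : x ^ d * ((1+x)/x) ^ d ≤ x ^ d * (1 + d / x) :=
    mul_le_mul_of_nonneg_left h1 (by positivity)
  have h4 : x ^ d * (1 + d / x) = x ^ d + d * x ^ (d-1) := by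
    rw [Real.rpow_sub hx, Real.rpow_one]
    field_simp
  linarith [h4 ▸ h3]

lemma F_le_one {x d : ℝ} (hx : 0 ≤ x) (hd0 : 0 ≤ d) (hd1 : d ≤ 1) :
    (1 + x) ^ d - x ^ d ≤ 1 := by
  rcases le_total x 1 with h | h
  · have h1 : (1 + x) ^ d ≤ 1 + x :=
      (Real.rpow_le_rpow_of_exponent_le (by linarith) hd1).trans_eq (Real.rpow_one _)
    have h2 : x ≤ x ^ d := by
      calc x = x ^ (1:ℝ) := (Real.rpow_one x).symm
      _ ≤ x ^ d := Real.rpow_le_rpow_of_exponent_ge' hx h hd0 hd1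
    linarith
  · have hx0 : 0 < x := by linarith
    have key := F_upper hx0 hd0 hd1
    have h5 : x ^ (d - 1) ≤ 1 := Real.rpow_le_one_of_one_le_of_nonpos h (by linarith)
    nlinarith

lemma F_lower {x d : ℝ} (hx : 1 ≤ x) (hd0 : 0 ≤ d) (hd1 : d ≤ 1) :
    d * (2 * x) ^ (d - 1) ≤ (1 + x) ^ d - x ^ d := by
  have hx1 : (0:ℝ) < 1 + x := by linarith
  -- x^d ≤ (1+x)^d - d*(1+x)^(d-1)
  have h1 : (x / (1 + x)) ^ d ≤ (1 - d) + d * (x / (1 + x)) :=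
    amgm (by positivity) hd0 hd1
  have h2 : x ^ d = (1 + x) ^ d * (x / (1 + x)) ^ d := by
    rw [← Real.mul_rpow hx1.le (by positivity)]
    congr 1; field_simp
  have h3 : (1 + x) ^ d * ((1 - d) + d * (x / (1 + x))) =
      (1 + x) ^ d - d * (1 + x) ^ (d - 1) := by
    rw [Real.rpow_sub hx1, Real.rpow_one]
    field_simp
    ring
  have h4 : x ^ d ≤ (1 + x) ^ d - d * (1 + x) ^ (d - 1) := by
    rw [h2, ← h3]
    exact mul_le_mul_of_nonneg_left h1 (by positivity)
  have h5 : (2 * x) ^ (d - 1) ≤ (1 + x) ^ (d - 1) :=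
    Real.rpow_le_rpow_of_nonpos hx1 (by linarith) (by linarith)
  nlinarith

-- dominating function
noncomputable def gdom (s : ℝ) (x : ℝ) : ℝ :=
  (Ioc (0:ℝ) 1).indicator (fun _ => 1) x + (Ioi (1:ℝ)).indicator (fun x => x ^ s) x

lemma gdom_integrable {s : ℝ} (hs : s < -1) : IntegrableOn (gdom s) (Ioi (0:ℝ)) := by
  apply MeasureTheory.Integrable.add
  · exact ((integrableOn_const (by simp) (by simp) : IntegrableOn (fun _ => (1:ℝ)) (Ioc (0:ℝ) 1)).integrable_indicator
      measurableSet_Ioc).integrableOn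
  · exact ((integrableOn_Ioi_rpow_of_lt hs one_pos).integrable_indicator
      measurableSet_Ioi).integrableOn

lemma gdom_integral {s : ℝ} (hs : s < -1) :
    ∫ x in Ioi (0:ℝ), gdom s x = 1 + (-1 / (s + 1)) := by
  have h1 : IntegrableOn ((Ioc (0:ℝ) 1).indicator (fun _ => (1:ℝ))) (Ioi (0:ℝ)) :=
    ((integrableOn_const (by simp) (by simp) : IntegrableOn (fun _ => (1:ℝ)) (Ioc (0:ℝ) 1)).integrable_indicator measurableSet_Ioc).integrableOn
  have h2 : IntegrableOn ((Ioi (1:ℝ)).indicator (fun x => x ^ s)) (Ioi (0:ℝ)) :=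
    ((integrableOn_Ioi_rpow_of_lt hs one_pos).integrable_indicator measurableSet_Ioi).integrableOn
  rw [show (fun x => gdom s x) = gdom s from rfl]
  unfold gdom
  rw [MeasureTheory.integral_add h1 h2]
  congr 1
  · rw [MeasureTheory.integral_indicator measurableSet_Ioc,
      Measure.restrict_restrict measurableSet_Ioc]
    have : Ioc (0:ℝ) 1 ∩ Ioi 0 = Ioc 0 1 := by
      ext y; simp (config := {contextual := true}) [and_comm]
    simp [this]
  · rw [MeasureTheory.integral_indicator measurableSet_Ioi,
      Measure.restrict_restrict measurableSet_Ioi]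
    have : Ioi (1:ℝ) ∩ Ioi 0 = Ioi 1 := by
      ext y; simp (config := {contextual := true})
    rw [this, integral_Ioi_rpow_of_lt hs one_pos, Real.one_rpow]

lemma Fn_le_gdom {d : ℝ} (hd0 : 0 ≤ d) (hd1 : d ≤ 1) (n : ℕ) (hn : 1 ≤ n) {x : ℝ}
    (hx : x ∈ Ioi (0:ℝ)) :
    ((1 + x) ^ d - x ^ d) ^ n ≤ gdom (n * (d - 1)) x := by
  have hx0 : (0:ℝ) < x := hx
  have hF0 := F_nonneg hx0.le hd0
  rcases le_or_gt x 1 with h | h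
  · have : gdom (n * (d-1)) x = 1 := by
      unfold gdom
      rw [indicator_of_mem (mem_Ioc.2 ⟨hx0, h⟩), indicator_of_notMem (by simpa using h)]
      ring
    rw [this]
    exact pow_le_one₀ hF0 (F_le_one hx0.le hd0 hd1)
  · have hgx : gdom (n * (d-1)) x = x ^ ((n:ℝ) * (d-1)) := by
      unfold gdom
      rw [indicator_of_notMem (by simp [h.le]; intro h'; linarith), indicator_of_mem (mem_Ioi.2 h)]
      ring
    rw [hgx]
    have h1 : (1 + x) ^ d - x ^ d ≤ d * x ^ (d - 1) := by
      have := F_upper hx0 hd0 hd1; linarith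
    have h2 : ((1 + x) ^ d - x ^ d) ^ n ≤ (d * x ^ (d-1)) ^ n :=
      pow_le_pow_left₀ hF0 h1 n
    refine h2.trans ?_
    have h3 : (d * x ^ (d-1)) ^ n ≤ (x ^ (d-1)) ^ n := by
      rw [mul_pow]
      have : d ^ n ≤ 1 := pow_le_one₀ hd0 hd1
      nlinarith [pow_nonneg (Real.rpow_nonneg hx0.le (d-1)) n,
        pow_nonneg hd0 n]
    refine h3.trans_eq ?_
    rw [← Real.rpow_natCast (x ^ (d-1)) n, ← Real.rpow_mul hx0.le]
    ring_nf

lemma Fn_integrable {d : ℝ} (hd0 : 0 ≤ d) (hd1 : d ≤ 1) {n : ℕ} (hn : 1 ≤ n)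
    (hs : (n:ℝ) * (d - 1) < -1) :
    IntegrableOn (fun x : ℝ => ((1 + x) ^ d - x ^ d) ^ n) (Ioi (0:ℝ)) := by
  apply Integrable.mono' (gdom_integrable hs)
  · apply Measurable.aestronglyMeasurable; fun_prop
  · filter_upwards [ae_restrict_mem measurableSet_Ioi] with x hx
    rw [Real.norm_eq_abs, abs_of_nonneg (pow_nonneg (F_nonneg (le_of_lt hx) hd0) n)]
    exact Fn_le_gdom hd0 hd1 n hn hx

lemma Fn_integral_le {d : ℝ} (hd0 : 0 ≤ d) (hd1 : d ≤ 1) {n : ℕ} (hn : 1 ≤ n)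
    (hs : (n:ℝ) * (d - 1) < -1) :
    ∫ x in Ioi (0:ℝ), ((1 + x) ^ d - x ^ d) ^ n ≤ 1 + (-1 / ((n:ℝ) * (d-1) + 1)) := by
  rw [← gdom_integral hs]
  apply MeasureTheory.integral_mono_of_nonneg
  · filter_upwards [ae_restrict_mem measurableSet_Ioi] with x hx
    exact pow_nonneg (F_nonneg (le_of_lt hx) hd0) n
  · exact gdom_integrable hs
  · filter_upwards [ae_restrict_mem measurableSet_Ioi] with x hx
    exact Fn_le_gdom hd0 hd1 n hn hx

lemma I2_lower {d : ℝ} (hd : d ∈ Ioo (2/5 : ℝ) (1/2)) :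
    (1/25) * (1 - 2*d)⁻¹ ≤ ∫ x in Ioi (0:ℝ), ((1 + x) ^ d - x ^ d) ^ 2 := by
  obtain ⟨hd1, hd2⟩ := hd
  have hd0 : 0 ≤ d := by linarith
  have hdle1 : d ≤ 1 := by linarith
  have hslt : (2:ℝ) * (d - 1) < -1 := by push_cast; linarith
  have hint : IntegrableOn (fun x : ℝ => ((1 + x) ^ d - x ^ d) ^ 2) (Ioi (0:ℝ)) :=
    Fn_integrable hd0 hdle1 (by norm_num) (by push_cast; linarith)
  have hs2 : 2*d - 2 < -1 := by linarith
  have hrint : IntegrableOn (fun x : ℝ => (1/25) * x ^ (2*d - 2)) (Ioi (1:ℝ)) :=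
    (integrableOn_Ioi_rpow_of_lt hs2 one_pos).const_mul _
  have step1 : ∫ x in Ioi (1:ℝ), (1/25) * x ^ (2*d-2)
      ≤ ∫ x in Ioi (1:ℝ), ((1 + x) ^ d - x ^ d) ^ 2 := by
    apply setIntegral_mono_on hrint (hint.mono_set (fun y hy => mem_Ioi.2 (lt_trans one_pos (mem_Ioi.1 hy))))
      measurableSet_Ioi
    intro x hx
    have hx1 : (1:ℝ) ≤ x := le_of_lt hx
    have hx0 : (0:ℝ) < x := lt_of_lt_of_le one_pos hx1
    have hl := F_lower hx1 hd0 hdle1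
    have hln : 0 ≤ d * (2*x) ^ (d-1) := by positivity
    have hsq : (d * (2*x)^(d-1))^2 ≤ ((1 + x) ^ d - x ^ d) ^ 2 :=
      pow_le_pow_left₀ hln hl 2
    refine le_trans ?_ hsq
    have e1 : (d * (2*x)^(d-1))^2 = d^2 * ((2*x)^(d-1))^(2:ℕ) := by ring
    have e2 : ((2*x)^(d-1))^(2:ℕ) = (2*x) ^ (2*d-2) := by
      rw [← Real.rpow_natCast ((2*x)^(d-1)) 2, ← Real.rpow_mul (by linarith)]
      norm_num; ring_nf
    have e3 : (2*x) ^ (2*d-2) = 2 ^ (2*d-2) * x ^ (2*d-2) :=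
      Real.mul_rpow (by norm_num) hx0.le
    have h4 : (1/4 : ℝ) ≤ 2 ^ (2*d-2) := by
      have : (2:ℝ) ^ (-2:ℝ) ≤ 2 ^ (2*d-2) :=
        Real.rpow_le_rpow_of_exponent_le one_le_two (by linarith)
      rw [show (2:ℝ)^(-2:ℝ) = 1/4 by
        rw [Real.rpow_neg (by norm_num), show ((2:ℝ))^(2:ℝ) = 4 by
          rw [show (2:ℝ) = ((2:ℕ):ℝ) by norm_num, Real.rpow_natCast]; norm_num]
        norm_num] at this
      exact this
    have h5 : (4/25 : ℝ) ≤ d^2 := by nlinarith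
    have hx2 : 0 ≤ x ^ (2*d-2) := Real.rpow_nonneg hx0.le _
    rw [e1, e2, e3]
    nlinarith [Real.rpow_nonneg (show (0:ℝ) ≤ 2 by norm_num) (2*d-2)]
  have step0 : ∫ x in Ioi (1:ℝ), (1/25) * x ^ (2*d-2) = (1/25) * (1-2*d)⁻¹ := by
    rw [integral_const_mul, integral_Ioi_rpow_of_lt hs2 one_pos,
      Real.one_rpow]
    congr 1
    have h : (1 : ℝ) - 2*d > 0 := by linarith
    rw [neg_div, div_eq_mul_inv, one_mul, ← inv_neg]
    congr 1
    ring
  have step2 : ∫ x in Ioi (1:ℝ), ((1 + x) ^ d - x ^ d) ^ 2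
      ≤ ∫ x in Ioi (0:ℝ), ((1 + x) ^ d - x ^ d) ^ 2 := by
    apply setIntegral_mono_set hint
    · filter_upwards [ae_restrict_mem measurableSet_Ioi] with x hx
      exact pow_nonneg (F_nonneg (le_of_lt hx) hd0) 2
    · exact HasSubset.Subset.eventuallyLE (fun y hy => mem_Ioi.2 (lt_trans one_pos (mem_Ioi.1 hy)))
  linarith [step0 ▸ step1]

lemma key_bounds {d : ℝ} (hd : d ∈ Ioo (2/5 : ℝ) (1/2)) :
    0 ≤ (1 / (1 + 3 * d) + ∫ x in Set.Ioi (0 : ℝ), ((1 + x) ^ d - x ^ d) ^ 3) /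
          (1 / (1 + 2 * d) + ∫ x in Set.Ioi (0 : ℝ), ((1 + x) ^ d - x ^ d) ^ 2) ^ ((3 : ℝ) / 2)
    ∧ (1 / (1 + 3 * d) + ∫ x in Set.Ioi (0 : ℝ), ((1 + x) ^ d - x ^ d) ^ 3) /
          (1 / (1 + 2 * d) + ∫ x in Set.Ioi (0 : ℝ), ((1 + x) ^ d - x ^ d) ^ 2) ^ ((3 : ℝ) / 2)
        ≤ 4 * (25 * (1 - 2*d)) ^ ((3:ℝ)/2) := by
  obtain ⟨hd1, hd2⟩ := hd
  have hd0 : (0:ℝ) ≤ d := by linarith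
  have hdle1 : d ≤ 1 := by linarith
  have hI3nn : 0 ≤ ∫ x in Set.Ioi (0 : ℝ), ((1 + x) ^ d - x ^ d) ^ 3 :=
    setIntegral_nonneg measurableSet_Ioi fun x hx =>
      pow_nonneg (F_nonneg (le_of_lt hx) hd0) 3
  have hNnn : 0 ≤ 1 / (1 + 3 * d) + ∫ x in Set.Ioi (0 : ℝ), ((1 + x) ^ d - x ^ d) ^ 3 := by
    have : 0 < 1 / (1 + 3*d) := by positivity
    linarith
  have hNle : 1 / (1 + 3 * d) + (∫ x in Set.Ioi (0 : ℝ), ((1 + x) ^ d - x ^ d) ^ 3) ≤ 4 := by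
    have h3 := Fn_integral_le hd0 hdle1 (n := 3) (by norm_num) (by push_cast; linarith)
    have h4 : (1:ℝ) + -1 / (((3:ℕ):ℝ) * (d-1) + 1) ≤ 3 := by
      push_cast
      have hne : 3 * (d-1) + 1 < 0 := by linarith
      rw [neg_div, ← div_neg]
      have h5 : 1 / -(3*(d-1)+1) ≤ 2 := by
        rw [div_le_iff₀ (by linarith)]; linarith
      linarith
    have h6 : 1 / (1 + 3*d) ≤ 1 := by
      rw [div_le_one (by linarith)]; linarith
    linarith
  have hBpos : 0 < (25 * (1 - 2*d) : ℝ)⁻¹ := by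
    apply inv_pos.2; nlinarith
  have hDB : (25 * (1 - 2*d) : ℝ)⁻¹
      ≤ 1 / (1 + 2 * d) + ∫ x in Set.Ioi (0 : ℝ), ((1 + x) ^ d - x ^ d) ^ 2 := by
    have h := I2_lower ⟨hd1, hd2⟩
    have heq : (1/25 : ℝ) * (1 - 2*d)⁻¹ = (25 * (1 - 2*d) : ℝ)⁻¹ := by
      rw [mul_inv]; ring
    have hpos : 0 < 1 / (1 + 2*d) := by positivity
    rw [heq] at h; linarith
  have hDpos : 0 < 1 / (1 + 2 * d) + ∫ x in Set.Ioi (0 : ℝ), ((1 + x) ^ d - x ^ d) ^ 2 :=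
    lt_of_lt_of_le hBpos hDB
  have hrp : ((25 * (1 - 2*d) : ℝ)⁻¹) ^ ((3:ℝ)/2)
      ≤ (1 / (1 + 2 * d) + ∫ x in Set.Ioi (0 : ℝ), ((1 + x) ^ d - x ^ d) ^ 2) ^ ((3:ℝ)/2) :=
    Real.rpow_le_rpow hBpos.le hDB (by norm_num)
  have hBrp_pos : 0 < ((25 * (1 - 2*d) : ℝ)⁻¹) ^ ((3:ℝ)/2) := Real.rpow_pos_of_pos hBpos _
  have hDrp_pos : 0 < (1 / (1 + 2 * d)
      + ∫ x in Set.Ioi (0 : ℝ), ((1 + x) ^ d - x ^ d) ^ 2) ^ ((3:ℝ)/2) :=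
    Real.rpow_pos_of_pos hDpos _
  refine ⟨div_nonneg hNnn hDrp_pos.le, ?_⟩
  have s1 := div_le_div_of_nonneg_right (c := (1 / (1 + 2 * d)
      + ∫ x in Set.Ioi (0 : ℝ), ((1 + x) ^ d - x ^ d) ^ 2) ^ ((3:ℝ)/2)) hNle hDrp_pos.le
  have s2 : (4:ℝ) / (1 / (1 + 2 * d)
        + ∫ x in Set.Ioi (0 : ℝ), ((1 + x) ^ d - x ^ d) ^ 2) ^ ((3:ℝ)/2)
      ≤ 4 / ((25 * (1 - 2*d) : ℝ)⁻¹) ^ ((3:ℝ)/2) :=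
    div_le_div_of_nonneg_left (by norm_num) hBrp_pos hrp
  have s3 : (4:ℝ) / ((25 * (1 - 2*d) : ℝ)⁻¹) ^ ((3:ℝ)/2)
      = 4 * (25 * (1 - 2*d)) ^ ((3:ℝ)/2) := by
    rw [Real.inv_rpow (by nlinarith), div_inv_eq_mul]
  linarith

open Filter in
/-- The function `k(d)` tends to `0` as `d → 1/2` from below. -/
theorem k_tendsto_zero_at_half :
    Tendsto
      (fun d : ℝ =>
        (1 / (1 + 3 * d) + ∫ x in Set.Ioi (0 : ℝ), ((1 + x) ^ d - x ^ d) ^ 3) /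
          (1 / (1 + 2 * d) + ∫ x in Set.Ioi (0 : ℝ), ((1 + x) ^ d - x ^ d) ^ 2) ^ ((3 : ℝ) / 2))
      (nhdsWithin (1 / 2) (Set.Iio (1 / 2))) (nhds 0) := by
  have hmem : Ioo (2/5 : ℝ) (1/2) ∈ nhdsWithin (1/2 : ℝ) (Iio (1/2)) :=
    Ioo_mem_nhdsLT_of_mem (by norm_num)
  have hub : Tendsto (fun d : ℝ => 4 * (25 * (1 - 2*d)) ^ ((3:ℝ)/2))
      (nhdsWithin (1/2 : ℝ) (Iio (1/2))) (nhds 0) := by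
    have h1 : Tendsto (fun d : ℝ => 25 * (1 - 2*d)) (nhdsWithin (1/2 : ℝ) (Iio (1/2)))
        (nhds 0) := by
      have : Tendsto (fun d : ℝ => 25 * (1 - 2*d)) (nhds (1/2 : ℝ))
          (nhds (25 * (1 - 2 * (1/2)))) := by
        apply Continuous.tendsto; continuity
      simpa using this.mono_left nhdsWithin_le_nhds
    have h2 : Tendsto (fun y : ℝ => y ^ ((3:ℝ)/2)) (nhds (0:ℝ)) (nhds 0) := by
      have := (Real.continuousAt_rpow_const 0 ((3:ℝ)/2) (Or.inr (by norm_num))).tendsto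
      rwa [Real.zero_rpow (by norm_num)] at this
    have := (h2.comp h1).const_mul (4:ℝ)
    simpa using this
  apply tendsto_of_tendsto_of_tendsto_of_le_of_le' tendsto_const_nhds hub
  · filter_upwards [hmem] with d hd using (key_bounds hd).1
  · filter_upwards [hmem] with d hd using (key_bounds hd).2
end

section
/- Let 0 ≤ d < 1/2. The series ∑_{i=0}^∞ a_i^2 a_{i+h}, summed over h from 1 to q, satisfies q^{−d} ∑_{h=1}^{q} ∑_{i=0}^∞ a_i^2 a_{i+h} → (c/d)·c_1(d) for some finite constant c_1(d) as q → ∞, when a_i ~ c·i^{d−1} with c > 0 and a_i ≥ 0 nonincreasing; in particular the normalized sum q^{−d} ∑_{h=1}^{q} ∑_{i=0}^∞ a_i^2 a_{i+h} is bounded in q. -/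
open Filter Finset

private lemma icc_to_range' (f : ℝ → ℝ) (q : ℕ) :
    ∑ h ∈ Finset.Icc 1 q, f h = ∑ i ∈ Finset.range q, f (1 + (i:ℕ)) := by
  rw [← Finset.Ico_add_one_right_eq_Icc, Finset.sum_Ico_eq_sum_range]
  simp

private lemma range_succ_to_icc' (f : ℕ → ℝ) (q : ℕ) :
    ∑ h ∈ Finset.range (q+1), f h = f 0 + ∑ h ∈ Finset.Icc 1 q, f h := by
  rw [Finset.sum_range_succ', ← Finset.Ico_add_one_right_eq_Icc, Finset.sum_Ico_eq_sum_range, add_comm]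
  congr 1
  exact Finset.sum_congr rfl fun i _ => by rw [Nat.add_comm]

private lemma sum_rpow_lower' (d : ℝ) (hd0 : 0 < d) (hd1 : d < 1) (q : ℕ) :
    ((1 + (q:ℝ)) ^ d - 1) / d ≤ ∑ h ∈ Finset.Icc 1 q, (h:ℝ) ^ (d - 1) := by
  have hanti : AntitoneOn (fun x : ℝ => x ^ (d-1)) (Set.Icc (1:ℝ) (1 + (q:ℕ))) := by
    intro x hx y hy hxy
    exact Real.rpow_le_rpow_of_nonpos (lt_of_lt_of_le one_pos hx.1) hxy (by linarith)
  have h := hanti.integral_le_sum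
  rw [integral_rpow (Or.inl (by linarith : (-1:ℝ) < d - 1))] at h
  simp only [sub_add_cancel, Real.one_rpow] at h
  refine le_trans (le_of_eq ?_) (le_trans h (le_of_eq ?_))
  · ring_nf
  · rw [icc_to_range' (fun x => x ^ (d-1)) q]

private lemma sum_rpow_upper' (d : ℝ) (hd0 : 0 < d) (hd1 : d < 1) (q : ℕ) (hq : 1 ≤ q) :
    ∑ h ∈ Finset.Icc 1 q, (h:ℝ) ^ (d - 1) ≤ 1 + ((q:ℝ) ^ d - 1) / d := by
  have hanti : AntitoneOn (fun x : ℝ => x ^ (d-1)) (Set.Icc (1:ℝ) (1 + ((q-1:ℕ):ℝ))) := by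
    intro x hx y hy hxy
    exact Real.rpow_le_rpow_of_nonpos (lt_of_lt_of_le one_pos hx.1) hxy (by linarith)
  have h := hanti.sum_le_integral
  rw [integral_rpow (Or.inl (by linarith : (-1:ℝ) < d - 1))] at h
  simp only [sub_add_cancel, Real.one_rpow] at h
  have hcast : (1:ℝ) + ((q-1:ℕ):ℝ) = (q:ℝ) := by
    have : ((q-1:ℕ):ℝ) = (q:ℝ) - 1 := by
      push_cast [Nat.cast_sub hq]; ring
    rw [this]; ring
  rw [hcast] at h
  have hsplit : ∑ h ∈ Finset.Icc 1 q, (h:ℝ) ^ (d - 1)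
      = 1 + ∑ i ∈ Finset.range (q-1), ((1:ℝ) + ((i+1:ℕ):ℝ)) ^ (d-1) := by
    rw [icc_to_range' (fun x => x ^ (d-1)) q]
    rcases Nat.exists_eq_add_of_le hq with ⟨k, rfl⟩
    simp only [Nat.add_sub_cancel_left]
    rw [add_comm 1 k, Finset.sum_range_succ']
    push_cast
    simp [Real.one_rpow, add_comm]
  rw [hsplit]
  linarith [h]

private lemma nat_rpow_neg_tendsto' (d : ℝ) (hd0 : 0 < d) :
    Tendsto (fun q : ℕ => (q:ℝ) ^ (-d)) atTop (nhds 0) :=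
  (tendsto_rpow_neg_atTop hd0).comp tendsto_natCast_atTop_atTop

private lemma ratio_rpow_tendsto' (d : ℝ) (i : ℕ) :
    Tendsto (fun q : ℕ => ((i:ℝ)/(q:ℝ) + 1) ^ d) atTop (nhds 1) := by
  have h1 : Tendsto (fun q : ℕ => (i:ℝ)/(q:ℝ) + 1) atTop (nhds 1) := by
    have := (tendsto_const_nhds (x := (i:ℝ))).div_atTop tendsto_natCast_atTop_atTop
    simpa using this.add tendsto_const_nhds
  have := h1.rpow_const (p := d) (Or.inl one_ne_zero)
  simpa using this

private lemma anchor' (d : ℝ) (hd0 : 0 < d) (hd1 : d < 1) :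
    Tendsto (fun q : ℕ => (q:ℝ) ^ (-d) * ∑ h ∈ Finset.Icc 1 q, (h:ℝ) ^ (d - 1))
      atTop (nhds (1/d)) := by
  have hlow : Tendsto (fun q : ℕ => (q:ℝ) ^ (-d) * (((1 + (q:ℝ)) ^ d - 1) / d)) atTop
      (nhds (1/d)) := by
    have key : ∀ᶠ q : ℕ in atTop, (q:ℝ) ^ (-d) * (((1 + (q:ℝ)) ^ d - 1) / d)
        = (((q:ℝ)⁻¹ + 1) ^ d - (q:ℝ)^(-d)) / d := by
      filter_upwards [eventually_ge_atTop 1] with q hq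
      have hqpos : (0:ℝ) < q := by exact_mod_cast hq
      have h1 : ((q:ℝ)⁻¹ + 1) ^ d = (1 + (q:ℝ)) ^ d * (q:ℝ) ^ (-d) := by
        rw [Real.rpow_neg hqpos.le, ← div_eq_mul_inv, ← Real.div_rpow (by linarith) hqpos.le]
        congr 1
        field_simp
      rw [h1]
      ring
    rw [tendsto_congr' key]
    have h2 : Tendsto (fun q : ℕ => ((q:ℝ)⁻¹ + 1) ^ d) atTop (nhds 1) := by
      have := ratio_rpow_tendsto' d 1
      simpa [one_div] using this
    have := (h2.sub (nat_rpow_neg_tendsto' d hd0)).div_const d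
    simpa using this
  have hup : Tendsto (fun q : ℕ => (q:ℝ) ^ (-d) * (1 + ((q:ℝ) ^ d - 1) / d)) atTop
      (nhds (1/d)) := by
    have key : ∀ᶠ q : ℕ in atTop, (q:ℝ) ^ (-d) * (1 + ((q:ℝ) ^ d - 1) / d)
        = (q:ℝ)^(-d) + (1 - (q:ℝ)^(-d)) / d := by
      filter_upwards [eventually_ge_atTop 1] with q hq
      have hqpos : (0:ℝ) < q := by exact_mod_cast hq
      have h1 : (q:ℝ)^(-d) * (q:ℝ)^d = 1 := by
        rw [Real.rpow_neg hqpos.le]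
        exact inv_mul_cancel₀ (Real.rpow_pos_of_pos hqpos d).ne'
      field_simp
      nlinarith [h1]
    rw [tendsto_congr' key]
    have h0 := nat_rpow_neg_tendsto' d hd0
    have := h0.add (((tendsto_const_nhds (x := (1:ℝ))).sub h0).div_const d)
    simpa using this
  refine tendsto_of_tendsto_of_tendsto_of_le_of_le' hlow hup ?_ ?_
  · filter_upwards [eventually_ge_atTop 1] with q hq
    have hqd : (0:ℝ) ≤ (q:ℝ)^(-d) := Real.rpow_nonneg (Nat.cast_nonneg q) _
    exact mul_le_mul_of_nonneg_left (sum_rpow_lower' d hd0 hd1 q) hqd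
  · filter_upwards [eventually_ge_atTop 1] with q hq
    have hqd : (0:ℝ) ≤ (q:ℝ)^(-d) := Real.rpow_nonneg (Nat.cast_nonneg q) _
    exact mul_le_mul_of_nonneg_left (sum_rpow_upper' d hd0 hd1 q hq) hqd

private lemma sq_summable' (d c : ℝ) (hd : d < 1 / 2) (hc : 0 < c) (a : ℕ → ℝ)
    (ha : Tendsto (fun i : ℕ => a i / (c * (i : ℝ) ^ (d - 1))) atTop (nhds 1)) :
    Summable (fun i : ℕ => (a i) ^ 2) := by
  have hO : (fun i : ℕ => a i) =O[atTop] (fun i : ℕ => c * (i:ℝ) ^ (d-1)) := by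
    have h1 := ha.isBigO_one ℝ
    have h2 := h1.mul (Asymptotics.isBigO_refl (fun i : ℕ => c * (i:ℝ) ^ (d-1)) atTop)
    refine h2.congr' ?_ (by filter_upwards with x; simp)
    filter_upwards [eventually_ge_atTop 1] with i hi
    have hipos : (0:ℝ) < i := by exact_mod_cast hi
    field_simp
  have hO2 : (fun i : ℕ => (a i)^2) =O[atTop] (fun i : ℕ => (i:ℝ) ^ (2*d-2)) := by
    have := hO.mul hO
    simp only [pow_two]
    refine this.trans (Asymptotics.IsBigO.of_bound (c^2) ?_)
    filter_upwards [eventually_ge_atTop 1] with i hi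
    have hipos : (0:ℝ) < i := by exact_mod_cast hi
    have : (i:ℝ)^(d-1) * (i:ℝ)^(d-1) = (i:ℝ)^(2*d-2) := by
      rw [← Real.rpow_add hipos]; ring_nf
    rw [Real.norm_eq_abs, Real.norm_eq_abs]
    rw [show c * (i:ℝ)^(d-1) * (c * (i:ℝ)^(d-1)) = c^2 * ((i:ℝ)^(d-1) * (i:ℝ)^(d-1)) by ring,
      this, abs_mul]
    rw [abs_of_nonneg (by positivity : (0:ℝ) ≤ c^2), abs_of_nonneg (by positivity)]
  have hsum : Summable (fun i : ℕ => (i:ℝ) ^ (2*d-2)) :=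
    Real.summable_nat_rpow.2 (by linarith)
  have := summable_of_isBigO_nat hsum hO2
  simpa only [pow_two] using this.congr (fun i => by ring)

private lemma ratio_limit' (d c : ℝ) (hc : 0 < c)
    (a : ℕ → ℝ) (hanonneg : ∀ i, 0 ≤ a i) (hamono : ∀ i j, i ≤ j → a j ≤ a i)
    (ha : Tendsto (fun i : ℕ => a i / (c * (i : ℝ) ^ (d - 1))) atTop (nhds 1))
    (hsq : Summable (fun i : ℕ => (a i) ^ 2)) :
    Tendsto (fun h : ℕ => (∑' i : ℕ, (a i)^2 * a (i+h)) / (c * (h:ℝ) ^ (d-1)))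
      atTop (nhds (∑' i : ℕ, (a i)^2)) := by
  have key : Tendsto (fun h : ℕ => ∑' i : ℕ, ((a i)^2 * a (i+h) / (c * (h:ℝ) ^ (d-1))))
      atTop (nhds (∑' i : ℕ, (a i)^2)) := by
    apply tendsto_tsum_of_dominated_convergence (bound := fun i => 2 * (a i)^2)
      (hsq.mul_left 2)
    · intro i
      have hr : Tendsto (fun h : ℕ => a (i+h) / (c * ((i+h:ℕ):ℝ) ^ (d-1))) atTop (nhds 1) := by
        have := ha.comp (tendsto_add_atTop_nat i)
        refine this.congr fun h => by simp [Nat.add_comm]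
      have hs : Tendsto (fun h : ℕ => (((i+h:ℕ):ℝ)) ^ (d-1) / (h:ℝ) ^ (d-1)) atTop (nhds 1) := by
        have h1 : Tendsto (fun h : ℕ => ((i:ℝ)/(h:ℝ) + 1) ^ (d-1)) atTop (nhds 1) := by
          have hb : Tendsto (fun h : ℕ => (i:ℝ)/(h:ℝ) + 1) atTop (nhds 1) := by
            have := (tendsto_const_nhds (x := (i:ℝ))).div_atTop tendsto_natCast_atTop_atTop
            simpa using this.add tendsto_const_nhds
          simpa using hb.rpow_const (p := d-1) (Or.inl one_ne_zero)
        refine h1.congr' ?_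
        filter_upwards [eventually_ge_atTop 1] with h hh
        have hpos : (0:ℝ) < h := by exact_mod_cast hh
        rw [← Real.div_rpow (by positivity) hpos.le]
        congr 2
        push_cast
        field_simp
      have hmain : Tendsto (fun h : ℕ => a (i+h) / (c * (h:ℝ) ^ (d-1))) atTop (nhds 1) := by
        have := hr.mul hs
        rw [mul_one] at this
        refine this.congr' ?_
        filter_upwards [eventually_ge_atTop 1] with h hh
        have hpos : (0:ℝ) < h := by exact_mod_cast hh
        have hih : (0:ℝ) < ((i+h:ℕ):ℝ) := by positivity
        have h2 : ((i+h:ℕ):ℝ) ^ (d-1) ≠ 0 := (Real.rpow_pos_of_pos hih _).ne'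
        have h3 : (h:ℝ) ^ (d-1) ≠ 0 := (Real.rpow_pos_of_pos hpos _).ne'
        field_simp
      have := hmain.const_mul ((a i)^2)
      rw [mul_one] at this
      refine this.congr fun h => by ring
    · have h2 : ∀ᶠ h : ℕ in atTop, a h / (c * (h:ℝ) ^ (d-1)) < 2 :=
        ha.eventually_lt_const (by norm_num)
      filter_upwards [h2, eventually_ge_atTop 1] with h hlt hh
      intro i
      have hpos : (0:ℝ) < h := by exact_mod_cast hh
      have hden : (0:ℝ) < c * (h:ℝ) ^ (d-1) := by positivity
      have hnn : (0:ℝ) ≤ (a i)^2 * a (i+h) / (c * (h:ℝ) ^ (d-1)) := by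
        have := hanonneg (i+h)
        positivity
      rw [Real.norm_of_nonneg hnn]
      have hle : a (i+h) ≤ a h := hamono h (i+h) (Nat.le_add_left h i)
      have step1 : (a i)^2 * a (i+h) / (c * (h:ℝ) ^ (d-1))
          ≤ (a i)^2 * (a h / (c * (h:ℝ) ^ (d-1))) := by
        rw [mul_div_assoc]
        exact mul_le_mul_of_nonneg_left (by gcongr) (sq_nonneg (a i))
      calc (a i)^2 * a (i+h) / (c * (h:ℝ) ^ (d-1))
          ≤ (a i)^2 * (a h / (c * (h:ℝ) ^ (d-1))) := step1
        _ ≤ (a i)^2 * 2 := mul_le_mul_of_nonneg_left hlt.le (sq_nonneg (a i))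
        _ = 2 * (a i)^2 := by ring
  refine key.congr fun h => ?_
  rw [tsum_div_const]

/-- For `0 < d < 1/2`, `a_i ~ c i^{d-1}` with `c > 0`, `a` nonnegative and nonincreasing,
the normalized sums `q^{-d} ∑_{h=1}^q ∑_i a_i^2 a_{i+h}` converge to `(c/d)·c₁(d)` for some
finite constant `c₁(d)`, and in particular are bounded in `q`. -/
theorem normalized_third_cov_sum_limit (d c : ℝ) (hd0 : 0 < d) (hd : d < 1 / 2) (hc : 0 < c)
    (a : ℕ → ℝ) (hanonneg : ∀ i, 0 ≤ a i) (hamono : ∀ i j, i ≤ j → a j ≤ a i)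
    (ha : Tendsto (fun i : ℕ => a i / (c * (i : ℝ) ^ (d - 1))) atTop (nhds 1)) :
    (∃ c₁ : ℝ, Tendsto
        (fun q : ℕ => (q : ℝ) ^ (-d) * ∑ h ∈ Finset.Icc 1 q, ∑' i : ℕ, (a i) ^ 2 * a (i + h))
        atTop (nhds (c / d * c₁)))
    ∧ ∃ M : ℝ, ∀ q : ℕ,
        (q : ℝ) ^ (-d) * ∑ h ∈ Finset.Icc 1 q, ∑' i : ℕ, (a i) ^ 2 * a (i + h) ≤ M := by
  have hd1 : d < 1 := by linarith
  set A : ℝ := ∑' i : ℕ, (a i)^2 with hA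
  set F : ℕ → ℝ := fun h => ∑' i : ℕ, (a i)^2 * a (i+h) with hF
  set G : ℕ → ℝ := fun h => c * (h:ℝ) ^ (d-1) with hG
  have hsq : Summable (fun i : ℕ => (a i) ^ 2) := sq_summable' d c hd hc a ha
  have hratio := ratio_limit' d c hc a hanonneg hamono ha hsq
  have hGnonneg : ∀ h, 0 ≤ G h := fun h => by
    simp only [hG]; positivity
  have hGpos : ∀ h : ℕ, 1 ≤ h → 0 < G h := fun h hh => by
    have : (0:ℝ) < h := by exact_mod_cast hh
    simp only [hG]; positivity
  have hG0 : G 0 = 0 := by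
    simp only [hG, Nat.cast_zero]
    rw [Real.zero_rpow (by linarith : d - 1 ≠ 0)]
    ring
  -- divergence of partial sums of G
  have hGsum_eq : ∀ q : ℕ, ∑ h ∈ Finset.range (q+1), G h
      = c * ∑ h ∈ Finset.Icc 1 q, (h:ℝ) ^ (d-1) := by
    intro q
    rw [range_succ_to_icc' G q, hG0, zero_add, Finset.mul_sum]
  have hGdiv : Tendsto (fun n : ℕ => ∑ h ∈ Finset.range n, G h) atTop atTop := by
    have hC : Tendsto (fun n : ℕ => c * (((n:ℝ)) ^ d - 1) / d) atTop atTop := by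
      have h1 : Tendsto (fun n : ℕ => (n:ℝ) ^ d) atTop atTop :=
        (tendsto_rpow_atTop hd0).comp tendsto_natCast_atTop_atTop
      have h2 := h1.atTop_add (tendsto_const_nhds (x := (-1:ℝ)))
      have h3 := h2.const_mul_atTop hc
      have h4 := h3.atTop_div_const hd0
      refine h4.congr fun n => by ring
    apply tendsto_atTop_mono' atTop ?_ hC
    filter_upwards [eventually_ge_atTop 1] with n hn
    rcases Nat.exists_eq_add_of_le hn with ⟨k, rfl⟩
    rw [show 1 + k = k + 1 by ring, hGsum_eq k]
    have := sum_rpow_lower' d hd0 hd1 k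
    have hcast : ((k+1 : ℕ):ℝ) = 1 + (k:ℝ) := by push_cast; ring
    rw [hcast]
    rw [div_le_iff₀ hd0] at this ⊢
    nlinarith [mul_le_mul_of_nonneg_left this hc.le]
  -- little-o of the error term
  have hoo : (fun h : ℕ => F h - A * G h) =o[atTop] G := by
    rw [Asymptotics.isLittleO_iff_tendsto' ?hyp]
    case hyp =>
      filter_upwards [eventually_ge_atTop 1] with h hh hzero
      exact absurd hzero (hGpos h hh).ne'
    have : Tendsto (fun h : ℕ => F h / G h - A) atTop (nhds 0) := by
      have := hratio.sub_const A
      rw [sub_self] at this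
      exact this
    refine this.congr' ?_
    filter_upwards [eventually_ge_atTop 1] with h hh
    have hne : G h ≠ 0 := (hGpos h hh).ne'
    field_simp
  have hE := hoo.sum_range hGnonneg hGdiv
  have hEz := hE.tendsto_div_nhds_zero
  -- main limit
  set S : ℕ → ℝ := fun q => ∑ h ∈ Finset.Icc 1 q, (h:ℝ) ^ (d-1) with hS
  set E : ℕ → ℝ := fun n => ∑ h ∈ Finset.range n, (F h - A * G h) with hEdef
  have hSpos : ∀ q : ℕ, 1 ≤ q → (1:ℝ) ≤ S q := by
    intro q hq
    have hmem : 1 ∈ Finset.Icc 1 q := Finset.mem_Icc.2 ⟨le_refl 1, hq⟩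
    have : ((1:ℕ):ℝ) ^ (d-1) = 1 := by norm_num
    calc (1:ℝ) = ((1:ℕ):ℝ) ^ (d-1) := this.symm
      _ ≤ S q := Finset.single_le_sum (f := fun h : ℕ => (h:ℝ)^(d-1))
          (fun i _ => Real.rpow_nonneg (Nat.cast_nonneg i) _) hmem
  have hES : ∀ q : ℕ, ∑ h ∈ Finset.Icc 1 q, F h = E (q+1) + A * (c * S q) - F 0 := by
    intro q
    have h1 : ∑ h ∈ Finset.range (q+1), F h = F 0 + ∑ h ∈ Finset.Icc 1 q, F h :=
      range_succ_to_icc' F q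
    have h2 : E (q+1) = ∑ h ∈ Finset.range (q+1), F h - A * ∑ h ∈ Finset.range (q+1), G h := by
      simp only [hEdef, Finset.sum_sub_distrib, Finset.mul_sum]
    rw [h2, hGsum_eq q, h1]
    ring
  have T1 : Tendsto (fun q : ℕ => (q:ℝ)^(-d) * S q) atTop (nhds (1/d)) := anchor' d hd0 hd1
  have T3 : Tendsto (fun q : ℕ => (q:ℝ)^(-d)) atTop (nhds 0) := nat_rpow_neg_tendsto' d hd0
  have T2 : Tendsto (fun q : ℕ => E (q+1) / (∑ h ∈ Finset.range (q+1), G h)) atTop (nhds 0) :=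
    hEz.comp (tendsto_add_atTop_nat 1)
  have main : Tendsto
      (fun q : ℕ => (q : ℝ) ^ (-d) * ∑ h ∈ Finset.Icc 1 q, F h)
      atTop (nhds (c / d * A)) := by
    have comb : Tendsto (fun q : ℕ =>
        A * c * ((q:ℝ)^(-d) * S q)
        + (E (q+1) / (∑ h ∈ Finset.range (q+1), G h)) * (c * ((q:ℝ)^(-d) * S q))
        - F 0 * (q:ℝ)^(-d)) atTop
        (nhds (A * c * (1/d) + 0 * (c * (1/d)) - F 0 * 0)) := by
      exact ((((tendsto_const_nhds (x := A*c)).mul T1).add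
        (T2.mul ((tendsto_const_nhds (x := c)).mul T1))).sub
        ((tendsto_const_nhds (x := F 0)).mul T3))
    have heq : ∀ᶠ q : ℕ in atTop,
        A * c * ((q:ℝ)^(-d) * S q)
        + (E (q+1) / (∑ h ∈ Finset.range (q+1), G h)) * (c * ((q:ℝ)^(-d) * S q))
        - F 0 * (q:ℝ)^(-d)
        = (q : ℝ) ^ (-d) * ∑ h ∈ Finset.Icc 1 q, F h := by
      filter_upwards [eventually_ge_atTop 1] with q hq
      rw [hES q, hGsum_eq q]
      change A * c * ((q:ℝ)^(-d) * S q) + (E (q+1) / (c * S q)) * (c * ((q:ℝ)^(-d) * S q))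
        - F 0 * (q:ℝ)^(-d) = (q:ℝ)^(-d) * (E (q+1) + A * (c * S q) - F 0)
      have hSne : c * S q ≠ 0 := by
        have := hSpos q hq
        positivity
      have hS0 : S q ≠ 0 := by linarith [hSpos q hq]
      field_simp
      ring
    have := comb.congr' heq
    convert this using 2
    ring
  constructor
  · exact ⟨A, main⟩
  · obtain ⟨M, hM⟩ := main.bddAbove_range
    exact ⟨M, fun q => hM ⟨q, rfl⟩⟩
end
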